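/- If the five vertices of a tagged pentatope are affinely independent, then the two children produced by the bisection rule each have affinely independent vertices, their union equals the original pentatope (as convex hulls), and their interiors are disjoint. -/

import Mathlib

section aux

variable {V : Type*} [AddCommGroup V] [Module ℝ V]

lemma mid_smul (a b : V) : midpoint ℝ a b = (2⁻¹ : ℝ) • a + (2⁻¹ : ℝ) • b := by
  rw [midpoint_eq_smul_add, invOf_eq_inv, smul_add]

lemma indep_mid {x : Fin 5 → V} (h : AffineIndependent ℝ x) :
    AffineIndependent ℝ ![x 0, midpoint ℝ (x 0) (x 4), x 1, x 2, x 3] := by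
  rw [affineIndependent_iff_of_fintype] at h ⊢
  intro w hw hc
  rw [Finset.weightedVSub_eq_linear_combination _ hw] at hc
  have hw' : w 0 + w 1 + w 2 + w 3 + w 4 = 0 := by
    simpa [Fin.sum_univ_five] using hw
  set u : Fin 5 → ℝ := ![w 0 + w 1 / 2, w 2, w 3, w 4, w 1 / 2] with hu
  have hsum : ∑ i, u i = 0 := by
    simp only [hu, Fin.sum_univ_five, Matrix.cons_val_zero, Matrix.cons_val_one,
      Matrix.head_cons, Matrix.cons_val_two, Matrix.tail_cons, Matrix.cons_val_three,
      Matrix.cons_val_four]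
    linarith
  have hz : Finset.univ.weightedVSub x u = (0 : V) := by
    rw [Finset.weightedVSub_eq_linear_combination _ hsum]
    simp only [hu, Fin.sum_univ_five, Matrix.cons_val_zero, Matrix.cons_val_one,
      Matrix.head_cons, Matrix.cons_val_two, Matrix.tail_cons, Matrix.cons_val_three,
      Matrix.cons_val_four, mid_smul] at hc ⊢
    linear_combination (norm := module) hc
  have hres := h u hsum hz
  have h0 := hres 0
  have h1 := hres 1
  have h2 := hres 2
  have h3 := hres 3
  have h4 := hres 4
  simp only [hu, Matrix.cons_val_zero, Matrix.cons_val_one, Matrix.head_cons,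
    Matrix.cons_val_two, Matrix.tail_cons, Matrix.cons_val_three,
    Matrix.cons_val_four] at h0 h1 h2 h3 h4
  intro i
  fin_cases i <;> simp <;> linarith

end aux


/-- A tagged pentatope: an ordered 5-tuple of vertices together with a type γ ∈ {0,1,2,3}. -/
structure TP (V : Type*) where
  v : Fin 5 → V
  γ : Fin 4

/-- The vertex permutation used in Stevenson's reflection, depending on the type. -/
def refPerm (γ : Fin 4) : Fin 5 → Fin 5 :=
  if γ = 0 then ![4, 3, 2, 1, 0]
  else if γ = 1 then ![4, 1, 3, 2, 0]
  else ![4, 1, 2, 3, 0]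

/-- The reflection of a tagged pentatope. -/
def TP.reflect {V : Type*} (t : TP V) : TP V := ⟨t.v ∘ refPerm t.γ, t.γ⟩

variable {V : Type*} [AddCommGroup V] [Module ℝ V]

/-- The midpoint x' = (x₀ + x₄)/2 of the refinement edge. -/
noncomputable def TP.mid (t : TP V) : V := midpoint ℝ (t.v 0) (t.v 4)

/-- First child of the bisection rule. -/
noncomputable def TP.child1 (t : TP V) : TP V :=
  ⟨![t.v 0, t.mid, t.v 1, t.v 2, t.v 3], t.γ + 1⟩

/-- Second child of the bisection rule. -/
noncomputable def TP.child2 (t : TP V) : TP V :=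
  ⟨if t.γ = 0 then ![t.v 4, t.mid, t.v 3, t.v 2, t.v 1]
    else if t.γ = 1 then ![t.v 4, t.mid, t.v 1, t.v 3, t.v 2]
    else ![t.v 4, t.mid, t.v 1, t.v 2, t.v 3], t.γ + 1⟩

/-- If the five vertices of a tagged pentatope in ℝ⁴ are affinely
independent, then each bisection child has affinely independent vertices, the union of
the children's convex hulls is the original pentatope, and their interiors are
disjoint. -/
theorem bisect_children_partition (t : TP (Fin 4 → ℝ))
    (h : AffineIndependent ℝ t.v) :
    AffineIndependent ℝ t.child1.v ∧
    AffineIndependent ℝ t.child2.v ∧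
    convexHull ℝ (Set.range t.child1.v) ∪ convexHull ℝ (Set.range t.child2.v) =
      convexHull ℝ (Set.range t.v) ∧
    interior (convexHull ℝ (Set.range t.child1.v)) ∩
      interior (convexHull ℝ (Set.range t.child2.v)) = ∅ := by
  classical
  set x : Fin 5 → (Fin 4 → ℝ) := t.v with hx
  set m : Fin 4 → ℝ := t.mid with hm
  have hmdef : m = midpoint ℝ (x 0) (x 4) := rfl
  set y1 : Fin 5 → (Fin 4 → ℝ) := ![x 0, m, x 1, x 2, x 3] with hy1
  set y2 : Fin 5 → (Fin 4 → ℝ) := ![x 4, m, x 1, x 2, x 3] with hy2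
  have hv1 : t.child1.v = y1 := rfl
  -- independence of y1
  have hiy1 : AffineIndependent ℝ y1 := by
    rw [hy1, hmdef]; exact indep_mid h
  -- independence of y2
  have hiy2 : AffineIndependent ℝ y2 := by
    have h' : AffineIndependent ℝ (x ∘ (Equiv.swap (0 : Fin 5) 4)) :=
      h.comp_embedding (Equiv.swap (0 : Fin 5) 4).toEmbedding
    have := indep_mid h'
    have he : ![(x ∘ (Equiv.swap (0 : Fin 5) 4)) 0,
        midpoint ℝ ((x ∘ (Equiv.swap (0 : Fin 5) 4)) 0) ((x ∘ (Equiv.swap (0 : Fin 5) 4)) 4),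
        (x ∘ (Equiv.swap (0 : Fin 5) 4)) 1, (x ∘ (Equiv.swap (0 : Fin 5) 4)) 2,
        (x ∘ (Equiv.swap (0 : Fin 5) 4)) 3] = y2 := by
      funext i
      fin_cases i <;>
        simp [hy2, Equiv.swap_apply_def, hmdef, midpoint_comm]
    rwa [he] at this
  -- child2 is a permutation of y2
  obtain ⟨σ, hσ⟩ : ∃ σ : Equiv.Perm (Fin 5), t.child2.v = y2 ∘ σ := by
    by_cases h0 : t.γ = 0
    · refine ⟨Equiv.swap 2 4, ?_⟩
      have : t.child2.v = ![x 4, m, x 3, x 2, x 1] := by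
        simp [TP.child2, h0]; exact ⟨rfl, rfl, rfl, rfl, rfl⟩
      rw [this]
      funext i
      fin_cases i <;> simp [hy2, Equiv.swap_apply_def]
    · by_cases h1 : t.γ = 1
      · refine ⟨Equiv.swap 3 4, ?_⟩
        have : t.child2.v = ![x 4, m, x 1, x 3, x 2] := by
          simp [TP.child2, h0, h1]; exact ⟨rfl, rfl, rfl, rfl, rfl⟩
        rw [this]
        funext i
        fin_cases i <;> simp [hy2, Equiv.swap_apply_def]
      · refine ⟨Equiv.refl _, ?_⟩
        have : t.child2.v = ![x 4, m, x 1, x 2, x 3] := by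
          simp [TP.child2, h0, h1]; exact ⟨rfl, rfl, rfl, rfl, rfl⟩
        rw [this]; rfl
  have hr1 : Set.range t.child1.v = Set.range y1 := by rw [hv1]
  have hr2 : Set.range t.child2.v = Set.range y2 := by
    rw [hσ]; exact σ.surjective.range_comp y2
  have hiy2' : AffineIndependent ℝ t.child2.v := by
    rw [hσ]; exact hiy2.comp_embedding σ.toEmbedding
  -- vertices of children are in hull of x
  have hmemx : ∀ i, x i ∈ convexHull ℝ (Set.range x) :=
    fun i => subset_convexHull ℝ _ ⟨i, rfl⟩
  have hmemm : m ∈ convexHull ℝ (Set.range x) := by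
    rw [hmdef]
    exact segment_subset_convexHull (Set.mem_range_self 0) (Set.mem_range_self 4)
      (midpoint_mem_segment _ _)
  have hsub1 : convexHull ℝ (Set.range y1) ⊆ convexHull ℝ (Set.range x) := by
    apply convexHull_min _ (convex_convexHull ℝ _)
    rw [Set.range_subset_iff]
    intro i
    fin_cases i <;> simp only [hy1, Matrix.cons_val_zero, Matrix.cons_val_one,
      Matrix.head_cons, Matrix.cons_val_two, Matrix.tail_cons, Matrix.cons_val_three,
      Matrix.cons_val_four] <;> first | exact hmemx _ | exact hmemm
  have hsub2 : convexHull ℝ (Set.range y2) ⊆ convexHull ℝ (Set.range x) := by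
    apply convexHull_min _ (convex_convexHull ℝ _)
    rw [Set.range_subset_iff]
    intro i
    fin_cases i <;> simp only [hy2, Matrix.cons_val_zero, Matrix.cons_val_one,
      Matrix.head_cons, Matrix.cons_val_two, Matrix.tail_cons, Matrix.cons_val_three,
      Matrix.cons_val_four] <;> first | exact hmemx _ | exact hmemm
  -- union
  have hunion : convexHull ℝ (Set.range y1) ∪ convexHull ℝ (Set.range y2) =
      convexHull ℝ (Set.range x) := by
    apply Set.Subset.antisymm (Set.union_subset hsub1 hsub2)
    intro p hp
    rw [convexHull_range_eq_exists_affineCombination] at hp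
    obtain ⟨s, w, hw0, hw1, hpe⟩ := hp
    set W : Fin 5 → ℝ := Set.indicator ↑s w with hW
    have hW0 : ∀ i, 0 ≤ W i := fun i => Set.indicator_apply_nonneg (fun hi => hw0 i hi)
    have hW1 : ∑ i, W i = 1 := by
      rw [hW, Finset.sum_indicator_subset w (Finset.subset_univ s)]
      exact hw1
    have hP : W 0 • x 0 + W 1 • x 1 + W 2 • x 2 + W 3 • x 3 + W 4 • x 4 = p := by
      have := Finset.affineCombination_indicator_subset w x (Finset.subset_univ s)
      rw [this] at hpe
      rw [Finset.affineCombination_eq_linear_combination _ _ _ hW1] at hpe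
      simpa [Fin.sum_univ_five] using hpe
    rcases le_total (W 4) (W 0) with hc | hc
    · left
      rw [convexHull_range_eq_exists_affineCombination]
      refine ⟨Finset.univ, ![W 0 - W 4, 2 * W 4, W 1, W 2, W 3], ?_, ?_, ?_⟩
      · intro i _
        fin_cases i <;>
          simp only [Matrix.cons_val_zero, Matrix.cons_val_one, Matrix.head_cons,
            Matrix.cons_val_two, Matrix.tail_cons, Matrix.cons_val_three,
            Matrix.cons_val_four] <;> first | linarith [hW0 0, hW0 1, hW0 2, hW0 3, hW0 4] |
            (simp; linarith [hW0 0, hW0 1, hW0 2, hW0 3, hW0 4])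
      · have := hW1
        simp only [Fin.sum_univ_five] at this ⊢
        simp only [Matrix.cons_val_zero, Matrix.cons_val_one, Matrix.head_cons,
          Matrix.cons_val_two, Matrix.tail_cons, Matrix.cons_val_three,
          Matrix.cons_val_four]
        linarith
      · have hsum : ∑ i, (![W 0 - W 4, 2 * W 4, W 1, W 2, W 3]) i = 1 := by
          have := hW1
          simp only [Fin.sum_univ_five] at this ⊢
          simp only [Matrix.cons_val_zero, Matrix.cons_val_one, Matrix.head_cons,
            Matrix.cons_val_two, Matrix.tail_cons, Matrix.cons_val_three,
            Matrix.cons_val_four]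
          linarith
        rw [Finset.affineCombination_eq_linear_combination _ _ _ hsum, ← hP]
        simp only [hy1, Fin.sum_univ_five, Matrix.cons_val_zero, Matrix.cons_val_one,
          Matrix.head_cons, Matrix.cons_val_two, Matrix.tail_cons, Matrix.cons_val_three,
          Matrix.cons_val_four, hmdef, mid_smul]
        module
    · right
      rw [convexHull_range_eq_exists_affineCombination]
      refine ⟨Finset.univ, ![W 4 - W 0, 2 * W 0, W 1, W 2, W 3], ?_, ?_, ?_⟩
      · intro i _
        fin_cases i <;>
          simp only [Matrix.cons_val_zero, Matrix.cons_val_one, Matrix.head_cons,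
            Matrix.cons_val_two, Matrix.tail_cons, Matrix.cons_val_three,
            Matrix.cons_val_four] <;> first | linarith [hW0 0, hW0 1, hW0 2, hW0 3, hW0 4] |
            (simp; linarith [hW0 0, hW0 1, hW0 2, hW0 3, hW0 4])
      · have := hW1
        simp only [Fin.sum_univ_five] at this ⊢
        simp only [Matrix.cons_val_zero, Matrix.cons_val_one, Matrix.head_cons,
          Matrix.cons_val_two, Matrix.tail_cons, Matrix.cons_val_three,
          Matrix.cons_val_four]
        linarith
      · have hsum : ∑ i, (![W 4 - W 0, 2 * W 0, W 1, W 2, W 3]) i = 1 := by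
          have := hW1
          simp only [Fin.sum_univ_five] at this ⊢
          simp only [Matrix.cons_val_zero, Matrix.cons_val_one, Matrix.head_cons,
            Matrix.cons_val_two, Matrix.tail_cons, Matrix.cons_val_three,
            Matrix.cons_val_four]
          linarith
        rw [Finset.affineCombination_eq_linear_combination _ _ _ hsum, ← hP]
        simp only [hy2, Fin.sum_univ_five, Matrix.cons_val_zero, Matrix.cons_val_one,
          Matrix.head_cons, Matrix.cons_val_two, Matrix.tail_cons, Matrix.cons_val_three,
          Matrix.cons_val_four, hmdef, mid_smul]
        module
  -- barycentric coordinates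
  have htop : affineSpan ℝ (Set.range x) = ⊤ := by
    rw [h.affineSpan_eq_top_iff_card_eq_finrank_add_one]
    simp
  let b : AffineBasis (Fin 5) ℝ (Fin 4 → ℝ) := ⟨x, h, htop⟩
  have hb : ∀ i, b i = x i := fun i => rfl
  let F : (Fin 4 → ℝ) →ᵃ[ℝ] ℝ := b.coord 0 - b.coord 4
  have hFapp : ∀ p, F p = b.coord 0 p - b.coord 4 p := fun p => rfl
  have hFx0 : F (x 0) = 1 := by
    rw [hFapp, ← hb 0, b.coord_apply_eq, b.coord_apply_ne (show (4:Fin 5) ≠ 0 by decide)]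
    norm_num
  have hFx4 : F (x 4) = -1 := by
    rw [hFapp, ← hb 4, b.coord_apply_eq, b.coord_apply_ne (show (0:Fin 5) ≠ 4 by decide)]
    norm_num
  have hFxi : ∀ i : Fin 5, i ≠ 0 → i ≠ 4 → F (x i) = 0 := by
    intro i hi0 hi4
    rw [hFapp, ← hb i, b.coord_apply_ne (Ne.symm hi0), b.coord_apply_ne (Ne.symm hi4)]
    norm_num
  have hFm : F m = 0 := by
    rw [hmdef, AffineMap.map_midpoint, hFx0, hFx4]
    rw [mid_smul]; norm_num
  have hhull1 : ∀ p ∈ convexHull ℝ (Set.range y1), 0 ≤ F p := by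
    intro p hp
    have : convexHull ℝ (Set.range y1) ⊆ F ⁻¹' Set.Ici 0 := by
      apply convexHull_min _ ((convex_Ici (0:ℝ)).affine_preimage F)
      rw [Set.range_subset_iff]
      intro i
      fin_cases i
      · show x 0 ∈ F ⁻¹' Set.Ici 0
        simp only [Set.mem_preimage, Set.mem_Ici, hFx0]; norm_num
      · show m ∈ F ⁻¹' Set.Ici 0
        simp only [Set.mem_preimage, Set.mem_Ici, hFm]; norm_num
      · show x 1 ∈ F ⁻¹' Set.Ici 0
        simp only [Set.mem_preimage, Set.mem_Ici, hFxi 1 (by decide) (by decide)]; norm_num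
      · show x 2 ∈ F ⁻¹' Set.Ici 0
        simp only [Set.mem_preimage, Set.mem_Ici, hFxi 2 (by decide) (by decide)]; norm_num
      · show x 3 ∈ F ⁻¹' Set.Ici 0
        simp only [Set.mem_preimage, Set.mem_Ici, hFxi 3 (by decide) (by decide)]; norm_num
    exact this hp
  have hhull2 : ∀ p ∈ convexHull ℝ (Set.range y2), F p ≤ 0 := by
    intro p hp
    have : convexHull ℝ (Set.range y2) ⊆ F ⁻¹' Set.Iic 0 := by
      apply convexHull_min _ ((convex_Iic (0:ℝ)).affine_preimage F)
      rw [Set.range_subset_iff]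
      intro i
      fin_cases i
      · show x 4 ∈ F ⁻¹' Set.Iic 0
        simp only [Set.mem_preimage, Set.mem_Iic, hFx4]; norm_num
      · show m ∈ F ⁻¹' Set.Iic 0
        simp only [Set.mem_preimage, Set.mem_Iic, hFm]; norm_num
      · show x 1 ∈ F ⁻¹' Set.Iic 0
        simp only [Set.mem_preimage, Set.mem_Iic, hFxi 1 (by decide) (by decide)]; norm_num
      · show x 2 ∈ F ⁻¹' Set.Iic 0
        simp only [Set.mem_preimage, Set.mem_Iic, hFxi 2 (by decide) (by decide)]; norm_num
      · show x 3 ∈ F ⁻¹' Set.Iic 0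
        simp only [Set.mem_preimage, Set.mem_Iic, hFxi 3 (by decide) (by decide)]; norm_num
    exact this hp
  -- interior points are strictly on one side
  have hlin : F.linear (x 4 - x 0) = -2 := by
    have := F.linearMap_vsub (x 4) (x 0)
    rw [vsub_eq_sub, vsub_eq_sub, hFx0, hFx4] at this
    rw [this]; norm_num
  have hlin' : F.linear (x 0 - x 4) = 2 := by
    have := F.linearMap_vsub (x 0) (x 4)
    rw [vsub_eq_sub, vsub_eq_sub, hFx0, hFx4] at this
    rw [this]; norm_num
  have key : ∀ (G : (Fin 4 → ℝ) →ᵃ[ℝ] ℝ) (d : Fin 4 → ℝ) (c : ℝ), G.linear d = c → c < 0 →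
      ∀ S : Set (Fin 4 → ℝ), (∀ q ∈ S, 0 ≤ G q) → ∀ p ∈ interior S, 0 < G p := by
    intro G d c hd hc S hS p hp
    have h0 : 0 ≤ G p := hS p (interior_subset hp)
    rcases h0.lt_or_eq with hlt | heq
    · exact hlt
    · exfalso
      obtain ⟨ε, hε, hball⟩ := Metric.isOpen_iff.mp isOpen_interior p hp
      set δ : ℝ := ε / (2 * (‖d‖ + 1)) with hδ
      have hdpos : (0:ℝ) < ‖d‖ + 1 := by positivity
      have hδpos : 0 < δ := by positivity
      set q : Fin 4 → ℝ := δ • d + p with hq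
      have hqball : q ∈ Metric.ball p ε := by
        rw [Metric.mem_ball, dist_eq_norm]
        have : q - p = δ • d := by rw [hq]; abel
        rw [this, norm_smul, Real.norm_eq_abs, abs_of_pos hδpos]
        calc δ * ‖d‖ ≤ δ * (‖d‖ + 1) := by nlinarith [norm_nonneg d]
          _ = ε / 2 := by
            rw [hδ, div_mul_eq_mul_div, mul_comm (2:ℝ) _, ← div_div, mul_div_assoc,
              div_self hdpos.ne', mul_one]
          _ < ε := by linarith
      have hqS : q ∈ S := interior_subset (hball hqball)
      have hq0 : 0 ≤ G q := hS q hqS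
      have hFq : G q = G p + δ * c := by
        rw [hq, ← vadd_eq_add, AffineMap.map_vadd, LinearMap.map_smul, hd,
          vadd_eq_add, smul_eq_mul]
        ring
      rw [hFq, ← heq] at hq0
      nlinarith
  have hint1 : ∀ p ∈ interior (convexHull ℝ (Set.range y1)), 0 < F p :=
    key F (x 4 - x 0) (-2) hlin (by norm_num) _ hhull1
  have hint2 : ∀ p ∈ interior (convexHull ℝ (Set.range y2)), 0 < (-F) p := by
    refine key (-F) (x 0 - x 4) (-2) ?_ (by norm_num) _ ?_
    · rw [AffineMap.neg_linear, LinearMap.neg_apply, hlin']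
    · intro q hq
      have := hhull2 q hq
      rw [AffineMap.coe_neg, Pi.neg_apply]
      linarith
  refine ⟨hv1 ▸ hiy1, hiy2', ?_, ?_⟩
  · rw [hr1, hr2, hunion]
  · rw [hr1, hr2, Set.eq_empty_iff_forall_notMem]
    rintro p ⟨h1, h2⟩
    have hp1 := hint1 p h1
    have hp2 := hint2 p h2
    rw [AffineMap.coe_neg, Pi.neg_apply] at hp2
    linarith
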